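/- arXiv:1806.10363 — 2 statements merged into one kernel-verified Lean document; each statement's English description precedes it below -/
import Mathlib

section
/- There exists an upward closed set A of Turing degrees (i.e., d ∈ A and d ≤ d' imply d' ∈ A) such that for no pair of equivalence relations R, S on ℕ does Spec⇒(R,S) = A. -/
/-- `OracleRecursiveIn O f` means the partial function `f` is partial recursive in the
(total) oracle `O`. -/
inductive OracleRecursiveIn (O : ℕ → ℕ) : (ℕ →. ℕ) → Prop
  | zero : OracleRecursiveIn O (pure 0)
  | succ : OracleRecursiveIn O Nat.succ
  | left : OracleRecursiveIn O ↑fun n : ℕ => n.unpair.1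
  | right : OracleRecursiveIn O ↑fun n : ℕ => n.unpair.2
  | oracle : OracleRecursiveIn O ↑O
  | pair {f g} : OracleRecursiveIn O f → OracleRecursiveIn O g →
      OracleRecursiveIn O fun n => Nat.pair <$> f n <*> g n
  | comp {f g} : OracleRecursiveIn O f → OracleRecursiveIn O g →
      OracleRecursiveIn O fun n => g n >>= f
  | prec {f g} : OracleRecursiveIn O f → OracleRecursiveIn O g →
      OracleRecursiveIn O (Nat.unpaired fun a n =>
        n.rec (f a) fun y IH => do let i ← IH; g (Nat.pair a (Nat.pair y i)))
  | rfind {f} : OracleRecursiveIn O f →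
      OracleRecursiveIn O fun a => Nat.rfind fun n => (fun m => m = 0) <$> f (Nat.pair a n)

/-- Turing reducibility between total functions on `ℕ`. -/
def OracleTuringReducible (f g : ℕ → ℕ) : Prop := OracleRecursiveIn g ↑f

/-- Turing equivalence of total functions on `ℕ`. -/
def OracleTuringEquivalent (f g : ℕ → ℕ) : Prop := OracleTuringReducible f g ∧ OracleTuringReducible g f

theorem OracleTuringReducible.refl (f : ℕ → ℕ) : OracleTuringReducible f f := OracleRecursiveIn.oracle

theorem OracleRecursiveIn.trans' {f : ℕ →. ℕ} {g h : ℕ → ℕ}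
    (hf : OracleRecursiveIn g f) (hg : OracleTuringReducible g h) : OracleRecursiveIn h f := by
  induction hf with
  | zero => exact .zero
  | succ => exact .succ
  | left => exact .left
  | right => exact .right
  | oracle => exact hg
  | pair _ _ ih₁ ih₂ => exact .pair ih₁ ih₂
  | comp _ _ ih₁ ih₂ => exact .comp ih₁ ih₂
  | prec _ _ ih₁ ih₂ => exact .prec ih₁ ih₂
  | rfind _ ih => exact .rfind ih

theorem OracleTuringReducible.trans {f g h : ℕ → ℕ}
    (h₁ : OracleTuringReducible f g) (h₂ : OracleTuringReducible g h) : OracleTuringReducible f h :=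
  OracleRecursiveIn.trans' h₁ h₂

/-- The setoid of Turing equivalence. -/
def turingSetoid : Setoid (ℕ → ℕ) :=
  ⟨OracleTuringEquivalent,
    fun f => ⟨.refl f, .refl f⟩,
    fun ⟨h₁, h₂⟩ => ⟨h₂, h₁⟩,
    fun ⟨a₁, a₂⟩ ⟨b₁, b₂⟩ => ⟨a₁.trans b₁, b₂.trans a₂⟩⟩

/-- Turing degrees. -/
def OracleTuringDegree : Type := Quotient turingSetoid

/-- The Turing degree of a total function. -/
def OracleTuringDegree.deg (f : ℕ → ℕ) : OracleTuringDegree := Quotient.mk turingSetoid f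

instance : LE OracleTuringDegree :=
  ⟨fun d₁ d₂ =>
    Quotient.liftOn₂ d₁ d₂ OracleTuringReducible
      (fun _ _ _ _ h h' =>
        propext ⟨fun hr => (h.2.trans hr).trans h'.1, fun hr => (h.1.trans hr).trans h'.2⟩)⟩

instance : LT OracleTuringDegree := ⟨fun d₁ d₂ => d₁ ≤ d₂ ∧ ¬d₂ ≤ d₁⟩

/-- The least Turing degree. -/
def OracleTuringDegree.zero : OracleTuringDegree := OracleTuringDegree.deg fun _ => 0

/-- A partial function is computable in a Turing degree if it is recursive in some
(equivalently, any) representative of that degree. -/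
def OracleTuringDegree.ComputableIn (d : OracleTuringDegree) (f : ℕ →. ℕ) : Prop :=
  Quotient.liftOn d (fun g => OracleRecursiveIn g f)
    (fun _ _ h => propext ⟨fun hr => hr.trans' h.1, fun hr => hr.trans' h.2⟩)

open Classical in
/-- The characteristic function of a set of naturals. -/
noncomputable def charFun (A : Set ℕ) : ℕ → ℕ := fun n => if n ∈ A then 1 else 0

/-- Turing reducibility between sets of naturals. -/
noncomputable def SetTuringReducible (A B : Set ℕ) : Prop :=
  OracleTuringReducible (charFun A) (charFun B)

/-- The Turing degree of a set of naturals. -/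
noncomputable def OracleTuringDegree.degSet (A : Set ℕ) : OracleTuringDegree :=
  OracleTuringDegree.deg (charFun A)

/-- `R` is `d`-computably reducible to `S`. -/
def ReducibleIn (d : OracleTuringDegree) (R S : ℕ → ℕ → Prop) : Prop :=
  ∃ f : ℕ → ℕ, d.ComputableIn ↑f ∧ ∀ x y, R x y ↔ S (f x) (f y)

/-- The reducibility spectrum of the pair `(R, S)`. -/
def SpecRed (R S : ℕ → ℕ → Prop) : Set OracleTuringDegree := {d | ReducibleIn d R S}

/-- The bi-reducibility spectrum of the pair `(R, S)`. -/
def SpecBired (R S : ℕ → ℕ → Prop) : Set OracleTuringDegree :=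
  {d | ReducibleIn d R S ∧ ReducibleIn d S R}

/-- The equivalence relation generated by a set `A`: two numbers are equivalent
iff they are equal or both belong to `A`. -/
def genRel (A : Set ℕ) : ℕ → ℕ → Prop := fun x y => x = y ∨ (x ∈ A ∧ y ∈ A)

/-- A ceer: an equivalence relation whose set of pairs is computably enumerable. -/
def Ceer (R : ℕ → ℕ → Prop) : Prop :=
  Equivalence R ∧ REPred fun p : ℕ × ℕ => R p.1 p.2

/-- A computably enumerable set of naturals. -/
def CePred (A : Set ℕ) : Prop := REPred (· ∈ A)

/-- A partial transversal of `R`: a set any two distinct elements of which are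
`R`-inequivalent. -/
def PartialTransversal (R : ℕ → ℕ → Prop) (A : Set ℕ) : Prop :=
  ∀ x ∈ A, ∀ y ∈ A, x ≠ y → ¬R x y

/-- An introreducible set: an infinite set computable from each of its infinite subsets. -/
def Introreducible (B : Set ℕ) : Prop :=
  B.Infinite ∧ ∀ C : Set ℕ, C ⊆ B → C.Infinite → SetTuringReducible B C


inductive OCode : Type
  | zero : OCode
  | succ : OCode
  | left : OCode
  | right : OCode
  | oracle : OCode
  | pair : OCode → OCode → OCode
  | comp : OCode → OCode → OCode
  | prec : OCode → OCode → OCode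
  | rfind : OCode → OCode

def evalo (g : ℕ → ℕ) : OCode → ℕ →. ℕ
  | .zero => pure 0
  | .succ => Nat.succ
  | .left => ↑fun n : ℕ => n.unpair.1
  | .right => ↑fun n : ℕ => n.unpair.2
  | .oracle => ↑g
  | .pair a b => fun n => Nat.pair <$> evalo g a n <*> evalo g b n
  | .comp a b => fun n => evalo g b n >>= evalo g a
  | .prec a b => Nat.unpaired fun x n =>
      n.rec (evalo g a x) fun y IH => do let i ← IH; evalo g b (Nat.pair x (Nat.pair y i))
  | .rfind a => fun x => Nat.rfind fun n => (fun m => m = 0) <$> evalo g a (Nat.pair x n)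

theorem exists_code {g : ℕ → ℕ} {f : ℕ →. ℕ} (h : OracleRecursiveIn g f) :
    ∃ c : OCode, evalo g c = f := by
  induction h with
  | zero => exact ⟨.zero, rfl⟩
  | succ => exact ⟨.succ, rfl⟩
  | left => exact ⟨.left, rfl⟩
  | right => exact ⟨.right, rfl⟩
  | oracle => exact ⟨.oracle, rfl⟩
  | pair _ _ ih₁ ih₂ =>
      obtain ⟨c₁, rfl⟩ := ih₁; obtain ⟨c₂, rfl⟩ := ih₂; exact ⟨.pair c₁ c₂, rfl⟩
  | comp _ _ ih₁ ih₂ =>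
      obtain ⟨c₁, rfl⟩ := ih₁; obtain ⟨c₂, rfl⟩ := ih₂; exact ⟨.comp c₁ c₂, rfl⟩
  | prec _ _ ih₁ ih₂ =>
      obtain ⟨c₁, rfl⟩ := ih₁; obtain ⟨c₂, rfl⟩ := ih₂; exact ⟨.prec c₁ c₂, rfl⟩
  | rfind _ ih =>
      obtain ⟨c, rfl⟩ := ih; exact ⟨.rfind c, rfl⟩

theorem evalo_recursiveIn (g : ℕ → ℕ) : ∀ c : OCode, OracleRecursiveIn g (evalo g c)
  | .zero => .zero
  | .succ => .succ
  | .left => .left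
  | .right => .right
  | .oracle => .oracle
  | .pair a b => .pair (evalo_recursiveIn g a) (evalo_recursiveIn g b)
  | .comp a b => .comp (evalo_recursiveIn g a) (evalo_recursiveIn g b)
  | .prec a b => .prec (evalo_recursiveIn g a) (evalo_recursiveIn g b)
  | .rfind a => .rfind (evalo_recursiveIn g a)

def dOC : ℕ → OCode
  | 0 => .zero
  | 1 => .succ
  | 2 => .left
  | 3 => .right
  | 4 => .oracle
  | n + 5 =>
    let q := n / 4
    have hq : q < n + 5 := lt_of_le_of_lt (Nat.div_le_self _ _) (by omega)
    have h1 : q.unpair.1 < n + 5 := lt_of_le_of_lt q.unpair_left_le hq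
    have h2 : q.unpair.2 < n + 5 := lt_of_le_of_lt q.unpair_right_le hq
    match n % 4 with
    | 0 => .pair (dOC q.unpair.1) (dOC q.unpair.2)
    | 1 => .comp (dOC q.unpair.1) (dOC q.unpair.2)
    | 2 => .prec (dOC q.unpair.1) (dOC q.unpair.2)
    | _ => .rfind (dOC q)
decreasing_by
  all_goals (have := Nat.unpair_left_le (n / 4); have := Nat.unpair_right_le (n / 4); have := Nat.div_le_self n 4; omega)

theorem dOC_surj : ∀ c : OCode, ∃ n, dOC n = c := by
  intro c
  induction c with
  | zero => exact ⟨0, by simp [dOC]⟩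
  | succ => exact ⟨1, by simp [dOC]⟩
  | left => exact ⟨2, by simp [dOC]⟩
  | right => exact ⟨3, by simp [dOC]⟩
  | oracle => exact ⟨4, by simp [dOC]⟩
  | pair a b iha ihb =>
      obtain ⟨na, rfl⟩ := iha; obtain ⟨nb, rfl⟩ := ihb
      refine ⟨4 * Nat.pair na nb + 5, ?_⟩
      have h4 : (4 * Nat.pair na nb) % 4 = 0 := by omega
      have h5 : (4 * Nat.pair na nb) / 4 = Nat.pair na nb := by omega
      simp [dOC, h4, h5]
  | comp a b iha ihb =>
      obtain ⟨na, rfl⟩ := iha; obtain ⟨nb, rfl⟩ := ihb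
      refine ⟨4 * Nat.pair na nb + 1 + 5, ?_⟩
      have h4 : (4 * Nat.pair na nb + 1) % 4 = 1 := by omega
      have h5 : (4 * Nat.pair na nb + 1) / 4 = Nat.pair na nb := by omega
      simp [dOC, h4, h5]
  | prec a b iha ihb =>
      obtain ⟨na, rfl⟩ := iha; obtain ⟨nb, rfl⟩ := ihb
      refine ⟨4 * Nat.pair na nb + 2 + 5, ?_⟩
      have h4 : (4 * Nat.pair na nb + 2) % 4 = 2 := by omega
      have h5 : (4 * Nat.pair na nb + 2) / 4 = Nat.pair na nb := by omega
      simp [dOC, h4, h5]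
  | rfind a iha =>
      obtain ⟨na, rfl⟩ := iha
      refine ⟨4 * na + 3 + 5, ?_⟩
      have h4 : (4 * na + 3) % 4 = 3 := by omega
      have h5 : (4 * na + 3) / 4 = na := by omega
      simp [dOC, h4, h5]

theorem evalo_pair (g : ℕ → ℕ) (a b : OCode) (n : ℕ) :
    evalo g (.pair a b) n = Nat.pair <$> evalo g a n <*> evalo g b n := rfl
theorem evalo_comp (g : ℕ → ℕ) (a b : OCode) (n : ℕ) :
    evalo g (.comp a b) n = evalo g b n >>= evalo g a := rfl
theorem evalo_prec (g : ℕ → ℕ) (a b : OCode) (n : ℕ) :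
    evalo g (.prec a b) n = (Nat.unpair n).2.rec (evalo g a (Nat.unpair n).1)
      (fun y IH => IH >>= fun i => evalo g b (Nat.pair (Nat.unpair n).1 (Nat.pair y i))) := rfl
theorem evalo_rfind (g : ℕ → ℕ) (a : OCode) (x : ℕ) :
    evalo g (.rfind a) x
      = Nat.rfind fun n => (fun m => decide (m = 0)) <$> evalo g a (Nat.pair x n) := rfl
theorem part_map_dom {α β : Type} (f : α → β) (o : Part α) : (f <$> o).Dom ↔ o.Dom := by
  constructor
  · intro h
    obtain ⟨y, hy⟩ := Part.dom_iff_mem.1 h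
    rw [Part.map_eq_map] at hy
    obtain ⟨u, hu, _⟩ := (Part.mem_map_iff _).1 hy
    exact Part.dom_iff_mem.2 ⟨_, hu⟩
  · intro h
    rw [Part.map_eq_map]
    exact Part.dom_iff_mem.2 ⟨_, (Part.mem_map_iff _).2 ⟨_, Part.get_mem h, rfl⟩⟩

theorem rfind_robust (g : ℕ → ℕ) (a : OCode) (x : ℕ)
    (iha : ∀ n, (evalo g a n).Dom → ∃ k, ∀ g' : ℕ → ℕ,
      (∀ m < k, g' m = g m) → evalo g' a n = evalo g a n)
    (h : (Nat.rfind fun n => (fun m => decide (m = 0)) <$> evalo g a (Nat.pair x n)).Dom) :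
    ∃ k, ∀ g' : ℕ → ℕ, (∀ m < k, g' m = g m) →
      (Nat.rfind fun n => (fun m => decide (m = 0)) <$> evalo g' a (Nat.pair x n))
        = Nat.rfind fun n => (fun m => decide (m = 0)) <$> evalo g a (Nat.pair x n) := by
  have hmem : (Nat.rfind fun n => (fun m => decide (m = 0)) <$> evalo g a (Nat.pair x n)).get h
      ∈ Nat.rfind fun n => (fun m => decide (m = 0)) <$> evalo g a (Nat.pair x n) :=
    Part.get_mem h
  set N := (Nat.rfind fun n => (fun m => decide (m = 0)) <$> evalo g a (Nat.pair x n)).get h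
    with hNdef
  have htrue : true ∈ (fun m => decide (m = 0)) <$> evalo g a (Nat.pair x N) :=
    Nat.rfind_spec hmem
  have hfalse : ∀ m < N, false ∈ (fun m => decide (m = 0)) <$> evalo g a (Nat.pair x m) :=
    fun m hm => Nat.rfind_min hmem hm
  have hsubdom : ∀ m, m ≤ N → (evalo g a (Nat.pair x m)).Dom := by
    intro m hm
    rcases lt_or_eq_of_le hm with hlt | rfl
    · exact (part_map_dom _ _).1 (Part.dom_iff_mem.2 ⟨_, hfalse m hlt⟩)
    · exact (part_map_dom _ _).1 (Part.dom_iff_mem.2 ⟨_, htrue⟩)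
  have hK : ∀ m, ∃ k, m ≤ N → ∀ g' : ℕ → ℕ, (∀ i < k, g' i = g i) →
      evalo g' a (Nat.pair x m) = evalo g a (Nat.pair x m) := by
    intro m
    by_cases hm : m ≤ N
    · obtain ⟨k, hk⟩ := iha (Nat.pair x m) (hsubdom m hm)
      exact ⟨k, fun _ => hk⟩
    · exact ⟨0, fun h' => absurd h' hm⟩
  choose K hKs using hK
  refine ⟨(Finset.range (N + 1)).sup K, fun g' hg' => ?_⟩
  have hagree : ∀ m, m ≤ N →
      evalo g' a (Nat.pair x m) = evalo g a (Nat.pair x m) := by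
    intro m hm
    refine hKs m hm g' fun i hi => hg' i (lt_of_lt_of_le hi ?_)
    exact Finset.le_sup (Finset.mem_range.2 (Nat.lt_succ_of_le hm))
  have h1 : (Nat.rfind fun n => (fun m => decide (m = 0)) <$> evalo g' a (Nat.pair x n))
      = Part.some N := by
    refine Part.eq_some_iff.2 (Nat.mem_rfind.2 ⟨?_, ?_⟩)
    · show true ∈ (fun m => decide (m = 0)) <$> evalo g' a (Nat.pair x N)
      rw [hagree N le_rfl]; exact htrue
    · intro m hm
      show false ∈ (fun m => decide (m = 0)) <$> evalo g' a (Nat.pair x m)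
      rw [hagree m (le_of_lt hm)]; exact hfalse m hm
  have h2 : (Nat.rfind fun n => (fun m => decide (m = 0)) <$> evalo g a (Nat.pair x n))
      = Part.some N := Part.eq_some_iff.2 hmem
  rw [h1, h2]

theorem use_lemma (g : ℕ → ℕ) : ∀ (c : OCode) (n : ℕ), (evalo g c n).Dom →
    ∃ k, ∀ g' : ℕ → ℕ, (∀ m < k, g' m = g m) → evalo g' c n = evalo g c n := by
  intro c
  induction c with
  | zero => exact fun n _ => ⟨0, fun _ _ => rfl⟩
  | succ => exact fun n _ => ⟨0, fun _ _ => rfl⟩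
  | left => exact fun n _ => ⟨0, fun _ _ => rfl⟩
  | right => exact fun n _ => ⟨0, fun _ _ => rfl⟩
  | oracle =>
      intro n _
      refine ⟨n + 1, fun g' hg' => ?_⟩
      show ((g' : ℕ →. ℕ) n) = ((g : ℕ →. ℕ) n)
      simp [hg' n (Nat.lt_succ_self n)]
  | pair a b iha ihb =>
      intro n h
      rw [show evalo g (.pair a b) n = Nat.pair <$> evalo g a n <*> evalo g b n from rfl] at h
      obtain ⟨y, hy⟩ := Part.dom_iff_mem.1 h
      simp [Seq.seq, Part.mem_bind_iff, Part.mem_map_iff] at hy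
      obtain ⟨u, hu, v, hv, _⟩ := hy
      obtain ⟨ka, hka⟩ := iha n (Part.dom_iff_mem.2 ⟨_, hu⟩)
      obtain ⟨kb, hkb⟩ := ihb n (Part.dom_iff_mem.2 ⟨_, hv⟩)
      refine ⟨max ka kb, fun g' hg' => ?_⟩
      have h1 : evalo g' a n = evalo g a n :=
        hka g' fun m hm => hg' m (lt_of_lt_of_le hm (le_max_left _ _))
      have h2 : evalo g' b n = evalo g b n :=
        hkb g' fun m hm => hg' m (lt_of_lt_of_le hm (le_max_right _ _))
      show Nat.pair <$> evalo g' a n <*> evalo g' b n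
          = Nat.pair <$> evalo g a n <*> evalo g b n
      rw [h1, h2]
  | comp a b iha ihb =>
      intro n h
      rw [show evalo g (.comp a b) n = evalo g b n >>= evalo g a from rfl] at h
      obtain ⟨y, hy⟩ := Part.dom_iff_mem.1 h
      obtain ⟨w, hw, hyw⟩ := Part.mem_bind_iff.1 hy
      obtain ⟨kb, hkb⟩ := ihb n (Part.dom_iff_mem.2 ⟨_, hw⟩)
      obtain ⟨ka, hka⟩ := iha w (Part.dom_iff_mem.2 ⟨_, hyw⟩)
      refine ⟨max ka kb, fun g' hg' => ?_⟩
      have h2 : evalo g' b n = evalo g b n :=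
        hkb g' fun m hm => hg' m (lt_of_lt_of_le hm (le_max_right _ _))
      have h1 : evalo g' a w = evalo g a w :=
        hka g' fun m hm => hg' m (lt_of_lt_of_le hm (le_max_left _ _))
      show evalo g' b n >>= evalo g' a = evalo g b n >>= evalo g a
      rw [h2, Part.eq_some_iff.2 hw]
      show (Part.some w).bind (evalo g' a) = (Part.some w).bind (evalo g a)
      exact (Part.bind_some w (evalo g' a)).trans (h1.trans (Part.bind_some w (evalo g a)).symm)
  | prec a b iha ihb =>
      intro n h
      have main : ∀ (j x : ℕ),
          (Nat.rec (evalo g a x) (fun y IH => IH >>= fun i =>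
              evalo g b (Nat.pair x (Nat.pair y i))) j : Part ℕ).Dom →
          ∃ k, ∀ g' : ℕ → ℕ, (∀ m < k, g' m = g m) →
            (Nat.rec (evalo g' a x) (fun y IH => IH >>= fun i =>
                evalo g' b (Nat.pair x (Nat.pair y i))) j : Part ℕ)
            = Nat.rec (evalo g a x) (fun y IH => IH >>= fun i =>
                evalo g b (Nat.pair x (Nat.pair y i))) j := by
        intro j
        induction j with
        | zero => exact fun x hx => iha x hx
        | succ j ihj =>
            intro x hx
            obtain ⟨y, hy⟩ := Part.dom_iff_mem.1 hx
            have hy' : y ∈ (Nat.rec (evalo g a x) (fun y IH => IH >>= fun i =>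
                evalo g b (Nat.pair x (Nat.pair y i))) j : Part ℕ) >>= (fun i =>
                evalo g b (Nat.pair x (Nat.pair j i))) := hy
            obtain ⟨w, hw, hyw⟩ := Part.mem_bind_iff.1 hy'
            obtain ⟨kr, hkr⟩ := ihj x (Part.dom_iff_mem.2 ⟨_, hw⟩)
            obtain ⟨kb, hkb⟩ := ihb (Nat.pair x (Nat.pair j w)) (Part.dom_iff_mem.2 ⟨_, hyw⟩)
            refine ⟨max kr kb, fun g' hg' => ?_⟩
            have h1 := hkr g' fun m hm => hg' m (lt_of_lt_of_le hm (le_max_left _ _))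
            have h2 := hkb g' fun m hm => hg' m (lt_of_lt_of_le hm (le_max_right _ _))
            show (Nat.rec (evalo g' a x) (fun y IH => IH >>= fun i =>
                evalo g' b (Nat.pair x (Nat.pair y i))) j : Part ℕ) >>= (fun i =>
                evalo g' b (Nat.pair x (Nat.pair j i)))
              = (Nat.rec (evalo g a x) (fun y IH => IH >>= fun i =>
                evalo g b (Nat.pair x (Nat.pair y i))) j : Part ℕ) >>= (fun i =>
                evalo g b (Nat.pair x (Nat.pair j i)))
            rw [h1, Part.eq_some_iff.2 hw]
            show (Part.some w).bind _ = (Part.some w).bind _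
            rw [Part.bind_some, Part.bind_some, h2]
      exact main n.unpair.2 n.unpair.1 h
  | rfind a iha =>
      intro x h
      exact rfind_robust g a x iha h

/-! ### Finite extension forcing machinery -/

def ExtL (σ : List ℕ) (x : ℕ → ℕ) : Prop := ∀ i < σ.length, x i = σ.getD i 0

theorem ExtL.mono {σ σ' : List ℕ} {x : ℕ → ℕ} (h : σ <+: σ') (hx : ExtL σ' x) :
    ExtL σ x := by
  obtain ⟨t, rfl⟩ := h
  intro i hi
  rw [hx i (by rw [List.length_append]; omega), List.getD_append _ _ _ _ hi]

theorem getD_of_prefix {σ σ' : List ℕ} (h : σ <+: σ') {i : ℕ} (hi : i < σ.length) :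
    σ.getD i 0 = σ'.getD i 0 := by
  obtain ⟨t, rfl⟩ := h
  rw [List.getD_append _ _ _ _ hi]

theorem extL_rangeMap (x : ℕ → ℕ) (K : ℕ) : ExtL ((List.range K).map x) x := by
  intro i hi
  simp only [List.length_map, List.length_range] at hi
  rw [List.getD_eq_getElem _ _ (by simpa using hi)]
  simp

theorem prefix_rangeMap {σ : List ℕ} {x : ℕ → ℕ} (hx : ExtL σ x) {K : ℕ}
    (hK : σ.length ≤ K) : σ <+: (List.range K).map x := by
  rw [List.prefix_iff_eq_take]
  apply List.ext_getElem
  · simp; omega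
  · intro i hi hi'
    have hiσ : i < σ.length := hi
    have hiK : i < K := lt_of_lt_of_le hiσ hK
    rw [List.getElem_take]
    rw [List.getElem_map, List.getElem_range]
    rw [← List.getD_eq_getElem σ 0 hiσ, ← hx i hiσ]

/-- `σ` forces the computation `c` on input `n` to output `m`. -/
def Forces (c : OCode) (σ : List ℕ) (n m : ℕ) : Prop :=
  ∀ x : ℕ → ℕ, ExtL σ x → evalo x c n = Part.some m

/-- `c` can never reduce (an extension of) `τ` to (an extension of) `σ` as oracle. -/
def Killed (c : OCode) (σ τ : List ℕ) : Prop :=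
  ∃ n, ∀ x y : ℕ → ℕ, ExtL σ x → ExtL τ y → evalo x c n ≠ Part.some (y n)

theorem Killed.mono {c : OCode} {σ σ' τ τ' : List ℕ} (h1 : σ <+: σ') (h2 : τ <+: τ')
    (h : Killed c σ τ) : Killed c σ' τ' := by
  obtain ⟨n, hn⟩ := h
  exact ⟨n, fun x y hx hy => hn x y (ExtL.mono h1 hx) (ExtL.mono h2 hy)⟩

abbrev KPNode := List Bool
abbrev KPState := KPNode → List ℕ

def KPcond (c : OCode) (σ τ : List ℕ) : Prop :=
  ∃ q : List ℕ × ℕ, σ <+: q.1 ∧ Forces c q.1 τ.length q.2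

open Classical in
noncomputable def stepP (c : OCode) (st : KPState) (p : KPNode × KPNode) : KPState :=
  if h : p.1 ≠ p.2 ∧ KPcond c (st p.1) (st p.2) then
    fun w => if w = p.1 then (Classical.choose h.2).1
      else if w = p.2 then st p.2 ++ [(Classical.choose h.2).2 + 1] else st w
  else st

theorem stepP_extends (c : OCode) (st : KPState) (p : KPNode × KPNode) (w : KPNode) :
    st w <+: stepP c st p w := by
  unfold stepP
  split
  · next h =>
      by_cases hw1 : w = p.1
      · subst hw1
        simp only [if_pos rfl]
        exact (Classical.choose_spec h.2).1
      · by_cases hw2 : w = p.2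
        · subst hw2
          simp only [if_neg hw1, if_pos rfl]
          exact List.prefix_append _ _
        · simp only [if_neg hw1, if_neg hw2]
          exact List.prefix_refl _
  · exact List.prefix_refl _

theorem stepP_killed (c : OCode) (st : KPState) {u v : KPNode} (hne : u ≠ v) :
    Killed c (stepP c st (u, v) u) (stepP c st (u, v) v) := by
  by_cases h : (u, v).1 ≠ (u, v).2 ∧ KPcond c (st (u, v).1) (st (u, v).2)
  case pos =>
      have hu : stepP c st (u, v) u = (Classical.choose h.2).1 := by
        unfold stepP; rw [dif_pos h, if_pos rfl]
      have hv : stepP c st (u, v) v = st v ++ [(Classical.choose h.2).2 + 1] := by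
        unfold stepP; rw [dif_pos h, if_neg (Ne.symm hne), if_pos rfl]
      rw [hu, hv]
      obtain ⟨hpre, hforce⟩ := Classical.choose_spec h.2
      refine ⟨(st v).length, fun x y hx hy => ?_⟩
      rw [hforce x hx]
      have hyv : y (st v).length = (Classical.choose h.2).2 + 1 := by
        have := hy (st v).length (by simp)
        rw [List.getD_append_right _ _ _ _ le_rfl, Nat.sub_self] at this
        simpa using this
      rw [hyv]
      intro hcontra
      have := Part.some_inj.1 hcontra
      omega
  case neg =>
      have e : stepP c st (u, v) = st := by unfold stepP; rw [dif_neg h]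
      rw [e]
      have hnK : ¬ KPcond c (st u) (st v) := fun hK => h ⟨hne, hK⟩
      refine ⟨(st v).length, fun x y hx hy hcontra => ?_⟩
      apply hnK
      have hdom : (evalo x c (st v).length).Dom := by rw [hcontra]; trivial
      obtain ⟨k, hk⟩ := use_lemma x c (st v).length hdom
      refine ⟨((List.range (max k (st u).length)).map x, y (st v).length), ?_, ?_⟩
      · exact prefix_rangeMap hx (le_max_right _ _)
      · intro x' hx'
        have hagree : ∀ m < k, x' m = x m := by
          intro m hm
          have hmK : m < max k (st u).length := lt_of_lt_of_le hm (le_max_left _ _)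
          have := hx' m (by simpa using hmK)
          rw [this]
          rw [List.getD_eq_getElem _ _ (by simpa using hmK)]
          simp
        rw [hk x' hagree, hcontra]

theorem foldl_extends (c : OCode) (l : List (KPNode × KPNode)) :
    ∀ st : KPState, ∀ w, st w <+: (List.foldl (stepP c) st l) w := by
  induction l with
  | nil => exact fun st w => List.prefix_refl _
  | cons p l ih =>
      intro st w
      exact (stepP_extends c st p w).trans (ih (stepP c st p) w)

theorem foldl_killed (c : OCode) (l : List (KPNode × KPNode)) :
    ∀ st : KPState, ∀ u v : KPNode, (u, v) ∈ l → u ≠ v →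
      Killed c ((List.foldl (stepP c) st l) u) ((List.foldl (stepP c) st l) v) := by
  induction l with
  | nil => intro st u v h; exact absurd h List.not_mem_nil
  | cons p l ih =>
      intro st u v hmem hne
      rcases List.mem_cons.1 hmem with heq | hmem'
      · subst heq
        exact (stepP_killed c st hne).mono
          (foldl_extends c l (stepP c st (u, v)) u)
          (foldl_extends c l (stepP c st (u, v)) v)
      · exact ih (stepP c st p) u v hmem' hne

/-! ### The tree of conditions -/

def nodesL : ℕ → List KPNode
  | 0 => [[]]
  | n + 1 => (nodesL n).flatMap fun u => [u ++ [false], u ++ [true]]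

def pairsL (n : ℕ) : List (KPNode × KPNode) :=
  (nodesL n).flatMap fun u => (nodesL n).map fun v => (u, v)

def node (n : ℕ) (r : ℕ → Bool) : KPNode := (List.range n).map fun i => r i

theorem node_succ (n : ℕ) (r : ℕ → Bool) : node (n + 1) r = node n r ++ [r n] := by
  unfold node
  rw [List.range_succ, List.map_append]
  rfl

theorem node_mem_nodesL : ∀ (n : ℕ) (r : ℕ → Bool), node n r ∈ nodesL n := by
  intro n
  induction n with
  | zero => intro r; simp [node, nodesL]
  | succ n ih =>
      intro r
      rw [node_succ]
      unfold nodesL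
      rw [List.mem_flatMap]
      refine ⟨node n r, ih r, ?_⟩
      cases hr : r n <;> simp

/-! ### The stages of the construction -/

noncomputable def stage : ℕ → KPState
  | 0 => fun _ => []
  | n + 1 =>
      List.foldl (stepP (dOC n.unpair.1))
        (fun w => stage n w.dropLast ++ [0]) (pairsL (n + 1))

noncomputable def str (n : ℕ) (r : ℕ → Bool) : List ℕ := stage n (node n r)

theorem str_succ_eq (n : ℕ) (r : ℕ → Bool) :
    str (n + 1) r = List.foldl (stepP (dOC n.unpair.1))
      (fun w : KPNode => stage n w.dropLast ++ [0]) (pairsL (n + 1)) (node (n + 1) r) := rfl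

theorem str_prefix_succ (n : ℕ) (r : ℕ → Bool) : str n r <+: str (n + 1) r := by
  have hpad : (fun w : KPNode => stage n w.dropLast ++ [0]) (node (n + 1) r)
      = str n r ++ [0] := by
    show stage n (node (n + 1) r).dropLast ++ [0] = stage n (node n r) ++ [0]
    rw [node_succ, List.dropLast_concat]
  calc str n r <+: str n r ++ [0] := List.prefix_append _ _
    _ = (fun w : KPNode => stage n w.dropLast ++ [0]) (node (n + 1) r) := hpad.symm
    _ <+: str (n + 1) r := by
        rw [str_succ_eq]
        exact foldl_extends (dOC n.unpair.1) (pairsL (n + 1)) (fun w : KPNode => stage n w.dropLast ++ [0]) (node (n + 1) r)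

theorem str_prefix {m n : ℕ} (h : m ≤ n) (r : ℕ → Bool) : str m r <+: str n r := by
  induction n, h using Nat.le_induction with
  | base => exact List.prefix_refl _
  | succ n hmn ih => exact ih.trans (str_prefix_succ n r)

theorem str_length (n : ℕ) (r : ℕ → Bool) : n ≤ (str n r).length := by
  induction n with
  | zero => exact Nat.zero_le _
  | succ n ih =>
      have hpad : (str n r ++ [0]) <+: str (n + 1) r := by
        have hpad' : (fun w : KPNode => stage n w.dropLast ++ [0]) (node (n + 1) r)
            = str n r ++ [0] := by
          show stage n (node (n + 1) r).dropLast ++ [0] = stage n (node n r) ++ [0]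
          rw [node_succ, List.dropLast_concat]
        rw [← hpad', str_succ_eq]
        exact foldl_extends (dOC n.unpair.1) (pairsL (n + 1)) (fun w : KPNode => stage n w.dropLast ++ [0]) (node (n + 1) r)
      have := hpad.length_le
      simp only [List.length_append, List.length_cons, List.length_nil] at this
      omega

/-- The continuum-sized antichain. -/
noncomputable def xf (r : ℕ → Bool) : ℕ → ℕ := fun i => (str (i + 1) r).getD i 0

theorem xf_ext (n : ℕ) (r : ℕ → Bool) : ExtL (str n r) (xf r) := by
  intro i hi
  show (str (i + 1) r).getD i 0 = (str n r).getD i 0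
  rcases le_total (i + 1) n with h | h
  · exact getD_of_prefix (str_prefix h r) (lt_of_lt_of_le (Nat.lt_succ_self i) (str_length _ _))
  · exact (getD_of_prefix (str_prefix h r) hi).symm

theorem node_ne {r r' : ℕ → Bool} {i₀ : ℕ} (hi : r i₀ ≠ r' i₀) {n : ℕ} (hn : i₀ < n) :
    node n r ≠ node n r' := by
  intro hcontra
  apply hi
  have h1 : (node n r).getD i₀ false = (node n r').getD i₀ false := by rw [hcontra]
  have hl : i₀ < (node n r).length := by simp [node]; omega
  have hl' : i₀ < (node n r').length := by simp [node]; omega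
  rw [List.getD_eq_getElem _ _ hl, List.getD_eq_getElem _ _ hl'] at h1
  simpa [node] using h1

theorem antichain_main {r r' : ℕ → Bool} (h : r ≠ r') : ¬ OracleTuringReducible (xf r) (xf r') := by
  intro hred
  obtain ⟨c, hc⟩ := exists_code hred
  obtain ⟨e, he⟩ := dOC_surj c
  obtain ⟨i₀, hi₀⟩ := Function.ne_iff.1 h
  set n := Nat.pair e (i₀ + 1) with hn
  have hi₀n : i₀ < n + 1 := by
    have := Nat.right_le_pair e (i₀ + 1)
    omega
  have hne : node (n + 1) r' ≠ node (n + 1) r :=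
    node_ne (Ne.symm hi₀) hi₀n
  have hmem : (node (n + 1) r', node (n + 1) r) ∈ pairsL (n + 1) := by
    unfold pairsL
    rw [List.mem_flatMap]
    exact ⟨node (n + 1) r', node_mem_nodesL _ _, List.mem_map.2
      ⟨node (n + 1) r, node_mem_nodesL _ _, rfl⟩⟩
  have hkill : Killed (dOC n.unpair.1) (str (n + 1) r') (str (n + 1) r) :=
    foldl_killed (dOC n.unpair.1) (pairsL (n + 1)) _ _ _ hmem hne
  rw [hn, Nat.unpair_pair, he] at hkill
  obtain ⟨pos, hpos⟩ := hkill
  exact hpos (xf r') (xf r) (xf_ext (n + 1) r') (xf_ext (n + 1) r) (congrFun hc pos)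

/-! ### Endgame: cardinality argument -/

theorem OracleTuringDegree.le_refl' (d : OracleTuringDegree) : d ≤ d :=
  Quotient.inductionOn d fun f => OracleTuringReducible.refl f

theorem OracleTuringDegree.le_trans' {a b c : OracleTuringDegree} (h1 : a ≤ b) (h2 : b ≤ c) : a ≤ c := by
  induction a using Quotient.inductionOn
  induction b using Quotient.inductionOn
  induction c using Quotient.inductionOn
  exact OracleTuringReducible.trans h1 h2

/-- The upward closed set of degrees generated by `{xf r : r ∈ S}`. -/
noncomputable def psiSet (S : Set (ℕ → Bool)) : Set OracleTuringDegree :=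
  {d | ∃ r ∈ S, OracleTuringDegree.deg (xf r) ≤ d}

theorem psiSet_up (S : Set (ℕ → Bool)) :
    ∀ d ∈ psiSet S, ∀ d' : OracleTuringDegree, d ≤ d' → d' ∈ psiSet S := by
  rintro d ⟨r, hr, hle⟩ d' hdd'
  exact ⟨r, hr, OracleTuringDegree.le_trans' hle hdd'⟩

theorem psiSet_inj : Function.Injective psiSet := by
  have key : ∀ S S', psiSet S = psiSet S' → S ⊆ S' := by
    intro S S' h r hr
    have hmem : OracleTuringDegree.deg (xf r) ∈ psiSet S := ⟨r, hr, OracleTuringDegree.le_refl' _⟩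
    rw [h] at hmem
    obtain ⟨r', hr', hle⟩ := hmem
    by_cases hrr : r' = r
    · exact hrr ▸ hr'
    · have hred : OracleTuringReducible (xf r') (xf r) := hle
      exact absurd hred (antichain_main hrr)
  exact fun S S' h => Set.Subset.antisymm (key S S' h) (key S' S h.symm)

open Classical in
/-- Coding a pair of binary relations into a single function `ℕ → Bool`. -/
noncomputable def jP (p : (ℕ → ℕ → Prop) × (ℕ → ℕ → Prop)) : ℕ → Bool := fun n =>
  if n.unpair.1 = 0 then
    (if p.1 n.unpair.2.unpair.1 n.unpair.2.unpair.2 then true else false)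
  else
    (if p.2 n.unpair.2.unpair.1 n.unpair.2.unpair.2 then true else false)

theorem jP_inj : Function.Injective jP := by
  intro p q h
  have h1 : p.1 = q.1 := by
    funext a b
    apply propext
    have hcf := congrFun h (Nat.pair 0 (Nat.pair a b))
    simp [jP, Nat.unpair_pair] at hcf
    exact hcf
  have h2 : p.2 = q.2 := by
    funext a b
    apply propext
    have hcf := congrFun h (Nat.pair 1 (Nat.pair a b))
    simp [jP, Nat.unpair_pair] at hcf
    exact hcf
  exact Prod.ext h1 h2

/-- Some upward closed set of Turing degrees is not a reducibility
spectrum. -/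
theorem stmt_3 :
    ∃ A : Set OracleTuringDegree, (∀ d ∈ A, ∀ d' : OracleTuringDegree, d ≤ d' → d' ∈ A) ∧
      ∀ R S : ℕ → ℕ → Prop, Equivalence R → Equivalence S → SpecRed R S ≠ A := by
  by_contra hcon
  push_neg at hcon
  have hch : ∀ S : Set (ℕ → Bool), ∃ p : (ℕ → ℕ → Prop) × (ℕ → ℕ → Prop),
      SpecRed p.1 p.2 = psiSet S := by
    intro S
    obtain ⟨R, S', _, _, heq⟩ := hcon (psiSet S) (psiSet_up S)
    exact ⟨(R, S'), heq⟩
  choose F hF using hch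
  have hFinj : Function.Injective F := by
    intro S S' h
    apply psiSet_inj
    rw [← hF S, ← hF S', h]
  exact Function.cantor_injective (fun S => jP (F S)) (jP_inj.comp hFinj)
end

section
/- Let R be an equivalence relation on ℕ with infinitely many equivalence classes and let d be a Turing degree. Then Id is d-computably reducible to R if and only if there is an infinite partial transversal A of R such that A is computable in d. -/
section AuxStmt9

theorem OracleRecursiveIn.of_partrec {O : ℕ → ℕ} {f : ℕ →. ℕ} (hf : Nat.Partrec f) :
    OracleRecursiveIn O f := by
  induction hf with
  | zero => exact .zero
  | succ => exact .succ
  | left => exact .left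
  | right => exact .right
  | pair _ _ ih₁ ih₂ => exact .pair ih₁ ih₂
  | comp _ _ ih₁ ih₂ => exact .comp ih₁ ih₂
  | prec _ _ ih₁ ih₂ => exact .prec ih₁ ih₂
  | rfind _ ih => exact .rfind ih

theorem OracleRecursiveIn.of_computable {O : ℕ → ℕ} {f : ℕ → ℕ} (hf : Computable f) :
    OracleRecursiveIn O ↑f := of_partrec (Partrec.nat_iff.mp hf)

theorem OracleRecursiveIn.congr' {O : ℕ → ℕ} {f g : ℕ → ℕ} (h : OracleRecursiveIn O ↑f)
    (e : ∀ n, f n = g n) : OracleRecursiveIn O (↑g : ℕ →. ℕ) := by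
  have : f = g := funext e
  rwa [this] at h

theorem OracleRecursiveIn.totalComp {O : ℕ → ℕ} {f g : ℕ → ℕ} (hf : OracleRecursiveIn O ↑f)
    (hg : OracleRecursiveIn O ↑g) : OracleRecursiveIn O (↑(fun n => f (g n)) : ℕ →. ℕ) := by
  have h := OracleRecursiveIn.comp hf hg
  have e : (fun n => (g : ℕ →. ℕ) n >>= (f : ℕ →. ℕ))
      = (↑(fun n => f (g n)) : ℕ →. ℕ) := by
    funext n; exact Part.bind_some (g n) (f : ℕ →. ℕ)
  rwa [e] at h

theorem OracleRecursiveIn.totalPair {O : ℕ → ℕ} {f g : ℕ → ℕ} (hf : OracleRecursiveIn O ↑f)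
    (hg : OracleRecursiveIn O ↑g) :
    OracleRecursiveIn O (↑(fun n => Nat.pair (f n) (g n)) : ℕ →. ℕ) := by
  have h := OracleRecursiveIn.pair hf hg
  have e : (fun n => Nat.pair <$> (f : ℕ →. ℕ) n <*> (g : ℕ →. ℕ) n)
      = (↑(fun n => Nat.pair (f n) (g n)) : ℕ →. ℕ) := by
    funext n; simp [PFun.coe_val, Seq.seq]
  rwa [e] at h

theorem OracleRecursiveIn.totalRfind {O : ℕ → ℕ} {F h : ℕ → ℕ} (hF : OracleRecursiveIn O ↑F)
    (h0 : ∀ a, F (Nat.pair a (h a)) = 0)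
    (hmin : ∀ a, ∀ m < h a, F (Nat.pair a m) ≠ 0) :
    OracleRecursiveIn O (↑h : ℕ →. ℕ) := by
  have H := OracleRecursiveIn.rfind hF
  have e : (fun a => Nat.rfind fun n => (fun m => m = 0) <$> (F : ℕ →. ℕ) (Nat.pair a n))
      = (↑h : ℕ →. ℕ) := by
    funext a
    rw [PFun.coe_val, Part.eq_some_iff]; apply Nat.mem_rfind.mpr
    constructor
    · simp [PFun.coe_val, h0 a]
    · intro m hm
      simp [PFun.coe_val, hmin a m hm]
  rwa [e] at H

theorem OracleRecursiveIn.totalPrec {O : ℕ → ℕ} {f g : ℕ → ℕ} (hf : OracleRecursiveIn O ↑f)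
    (hg : OracleRecursiveIn O ↑g) {T : ℕ → ℕ}
    (hT : ∀ a n, T (Nat.pair a n) =
      Nat.rec (motive := fun _ => ℕ) (f a)
        (fun y IH => g (Nat.pair a (Nat.pair y IH))) n) :
    OracleRecursiveIn O (↑T : ℕ →. ℕ) := by
  have h := OracleRecursiveIn.prec hf hg
  have key : ∀ a n, (Nat.rec (motive := fun _ => Part ℕ) ((f : ℕ →. ℕ) a)
      (fun y IH => do let i ← IH; (g : ℕ →. ℕ) (Nat.pair a (Nat.pair y i))) n)
      = Part.some (T (Nat.pair a n)) := by
    intro a n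
    induction n with
    | zero => simp [hT, PFun.coe_val]
    | succ n ih =>
      have h2 : T (Nat.pair a (n + 1)) =
          g (Nat.pair a (Nat.pair n (T (Nat.pair a n)))) := by
        rw [hT a (n + 1), hT a n]
      show (Nat.rec (motive := fun _ => Part ℕ) ((f : ℕ →. ℕ) a)
          (fun y IH => do let i ← IH; (g : ℕ →. ℕ) (Nat.pair a (Nat.pair y i))) n
          >>= fun i => (g : ℕ →. ℕ) (Nat.pair a (Nat.pair n i))) = _
      rw [ih]
      simp [PFun.coe_val, h2]
  have e : (Nat.unpaired fun a n =>
      Nat.rec (motive := fun _ => Part ℕ) ((f : ℕ →. ℕ) a)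
        (fun y IH => do let i ← IH; (g : ℕ →. ℕ) (Nat.pair a (Nat.pair y i))) n)
      = (↑T : ℕ →. ℕ) := by
    funext q
    have := key q.unpair.1 q.unpair.2
    simpa [Nat.unpaired, Nat.pair_unpair] using this
  rwa [e] at h

end AuxStmt9

/-- For `R` with infinitely many classes, `Id ≤_d R` iff `d`
computes an infinite partial transversal of `R`. -/
theorem stmt_9 (R : ℕ → ℕ → Prop) (hR : Equivalence R) (hinf : Infinite (Quot R))
    (d : OracleTuringDegree) :
    ReducibleIn d (fun x y => x = y) R ↔
      ∃ A : Set ℕ, A.Infinite ∧ PartialTransversal R A ∧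
        d.ComputableIn ↑(charFun A) := by
  classical
  obtain ⟨g, rfl⟩ := Quotient.exists_rep d
  constructor
  · rintro ⟨f, hfc, hf⟩
    have hfrec : OracleRecursiveIn g ↑f := hfc
    have hfi : Function.Injective f := by
      intro a b hab
      exact (hf a b).mpr (hab ▸ hR.refl (f a))
    have hub : ∀ x, ∃ n, x ≤ f n := by
      intro x
      by_contra hc
      push_neg at hc
      obtain ⟨a, b, hne, heq⟩ :=
        Finite.exists_ne_map_eq_of_infinite (fun n => (⟨f n, hc n⟩ : Fin x))
      exact hne (hfi (by simpa using heq))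
    set h : ℕ → ℕ := fun x => Nat.find (hub x) with hh_def
    have hspec : ∀ x, x ≤ f (h x) := fun x => Nat.find_spec (hub x)
    have hmin : ∀ x, ∀ m < h x, ¬ x ≤ f m := fun x m hm => Nat.find_min (hub x) hm
    -- h is recursive in g
    have hF : OracleRecursiveIn g
        (↑(fun p : ℕ => (if p.unpair.1 ≤ f p.unpair.2 then 0 else 1 : ℕ)) : ℕ →. ℕ) := by
      have hin : OracleRecursiveIn g
          (↑(fun p : ℕ => Nat.pair p.unpair.1 (f p.unpair.2)) : ℕ →. ℕ) := by
        have h1 : OracleRecursiveIn g (↑(fun p : ℕ => p.unpair.1) : ℕ →. ℕ) :=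
          OracleRecursiveIn.of_computable
            (Primrec.to_comp (Primrec.fst.comp Primrec.unpair))
        have h2 : OracleRecursiveIn g (↑(fun p : ℕ => f p.unpair.2) : ℕ →. ℕ) :=
          OracleRecursiveIn.totalComp hfrec
            (OracleRecursiveIn.of_computable
              (Primrec.to_comp (Primrec.snd.comp Primrec.unpair)))
        exact OracleRecursiveIn.totalPair h1 h2
      have hout : OracleRecursiveIn g
          (↑(fun q : ℕ => (if q.unpair.1 ≤ q.unpair.2 then 0 else 1 : ℕ)) : ℕ →. ℕ) :=
        OracleRecursiveIn.of_computable (Primrec.to_comp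
          (Primrec.ite
            (Primrec.nat_le.comp (Primrec.fst.comp Primrec.unpair)
              (Primrec.snd.comp Primrec.unpair))
            (Primrec.const 0) (Primrec.const 1)))
      refine (OracleRecursiveIn.totalComp hout hin).congr' fun p => ?_
      simp
    have hrec_h : OracleRecursiveIn g (↑h : ℕ →. ℕ) := by
      apply OracleRecursiveIn.totalRfind hF
      · intro a; simp [hspec a]
      · intro a m hm; simp [hmin a m hm]
    refine ⟨{x | f (h x) = x}, ?_, ?_, ?_⟩
    · -- infinite
      have hAub : ∀ b, ∃ x ∈ {x | f (h x) = x}, b < x := by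
        intro b
        set n := Nat.find (hub (b + 1)) with hn_def
        have hn : b + 1 ≤ f n := Nat.find_spec (hub (b + 1))
        refine ⟨f n, ?_, by omega⟩
        have he : h (f n) = n := by
          apply le_antisymm
          · exact Nat.find_min' (hub (f n)) le_rfl
          · by_contra hlt
            push_neg at hlt
            have h1 := hspec (f n)
            have h2 : ¬ (b + 1 ≤ f (h (f n))) := Nat.find_min (hub (b + 1)) hlt
            omega
        simp [Set.mem_setOf_eq, he]
      intro hfin
      obtain ⟨b, hb⟩ := hfin.bddAbove
      obtain ⟨x, hx, hbx⟩ := hAub b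
      exact absurd (hb hx) (by omega)
    · -- transversal
      intro x hx y hy hne hRxy
      have hx' : f (h x) = x := hx
      have hy' : f (h y) = y := hy
      have : h x = h y := (hf _ _).mpr (by rwa [hx', hy'])
      exact hne (by rw [← hx', ← hy', this])
    · -- charFun computable
      have hin : OracleRecursiveIn g (↑(fun x : ℕ => Nat.pair (f (h x)) x) : ℕ →. ℕ) :=
        OracleRecursiveIn.totalPair (OracleRecursiveIn.totalComp hfrec hrec_h)
          (OracleRecursiveIn.of_computable Computable.id)
      have hout : OracleRecursiveIn g
          (↑(fun q : ℕ => (if q.unpair.1 = q.unpair.2 then 1 else 0 : ℕ)) : ℕ →. ℕ) :=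
        OracleRecursiveIn.of_computable (Primrec.to_comp
          (Primrec.ite
            (Primrec.eq.comp (Primrec.fst.comp Primrec.unpair)
              (Primrec.snd.comp Primrec.unpair))
            (Primrec.const 1) (Primrec.const 0)))
      refine (OracleRecursiveIn.totalComp hout hin).congr'
        (g := charFun {x | f (h x) = x}) fun x => ?_
      by_cases hx : f (h x) = x <;> simp [charFun, Set.mem_setOf_eq, hx]
  · rintro ⟨A, hAinf, htrans, hAcomp⟩
    have hχ : OracleRecursiveIn g ↑(charFun A) := hAcomp
    have hχ1 : ∀ n, n ∈ A → charFun A n = 1 := by intro n hn; simp [charFun, hn]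
    have hχ0 : ∀ n, n ∉ A → charFun A n = 0 := by intro n hn; simp [charFun, hn]
    have hχ1' : ∀ n, charFun A n = 1 → n ∈ A := by
      intro n hn; by_contra hc; simp [charFun, hc] at hn
    set p : ℕ → Prop := fun n => n ∈ A with hp_def
    have hp : (setOf p).Infinite := by rw [hp_def]; exact hAinf
    set C : ℕ → ℕ := fun n =>
      Nat.rec (motive := fun _ => ℕ) 0 (fun m ih => ih + charFun A m) n with hC_def
    have hCsucc : ∀ n, C (n + 1) = C n + charFun A n := fun n => rfl
    have hCcount : ∀ n, C n = Nat.count p n := by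
      intro n
      induction n with
      | zero => simp [hC_def]
      | succ n ih =>
        rw [hCsucc n, Nat.count_succ, ih]
        by_cases hn : p n
        · simp [hn, hχ1 n hn]
        · have hn' : n ∉ A := hn
          simp [hn, hχ0 n hn']
    have hCrec : OracleRecursiveIn g (↑C : ℕ →. ℕ) := by
      have hg0 : OracleRecursiveIn g
          (↑(fun z : ℕ => z.unpair.2.unpair.2 + charFun A z.unpair.2.unpair.1) : ℕ →. ℕ) := by
        have h1 : OracleRecursiveIn g (↑(fun z : ℕ => z.unpair.2.unpair.2) : ℕ →. ℕ) :=
          OracleRecursiveIn.of_computable (Primrec.to_comp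
            (Primrec.snd.comp (Primrec.unpair.comp (Primrec.snd.comp Primrec.unpair))))
        have h2 : OracleRecursiveIn g
            (↑(fun z : ℕ => charFun A z.unpair.2.unpair.1) : ℕ →. ℕ) :=
          OracleRecursiveIn.totalComp hχ (OracleRecursiveIn.of_computable (Primrec.to_comp
            (Primrec.fst.comp (Primrec.unpair.comp (Primrec.snd.comp Primrec.unpair)))))
        have hout : OracleRecursiveIn g
            (↑(fun q : ℕ => q.unpair.1 + q.unpair.2) : ℕ →. ℕ) :=
          OracleRecursiveIn.of_computable (Primrec.to_comp
            (Primrec.nat_add.comp (Primrec.fst.comp Primrec.unpair)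
              (Primrec.snd.comp Primrec.unpair)))
        refine (OracleRecursiveIn.totalComp hout
          (OracleRecursiveIn.totalPair h1 h2)).congr' fun z => ?_
        simp
      have hTrec : OracleRecursiveIn g
          (↑(fun q : ℕ => Nat.rec (motive := fun _ => ℕ) 0
            (fun y IH => (fun z : ℕ =>
              z.unpair.2.unpair.2 + charFun A z.unpair.2.unpair.1)
                (Nat.pair q.unpair.1 (Nat.pair y IH))) q.unpair.2) : ℕ →. ℕ) := by
        apply OracleRecursiveIn.totalPrec (OracleRecursiveIn.of_computable (Computable.const 0)) hg0
        intro a n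
        simp [Nat.unpair_pair]
      have hpair0 : OracleRecursiveIn g (↑(fun n : ℕ => Nat.pair 0 n) : ℕ →. ℕ) :=
        OracleRecursiveIn.of_computable (Primrec.to_comp
          (Primrec₂.natPair.comp (Primrec.const 0) Primrec.id))
      refine (OracleRecursiveIn.totalComp hTrec hpair0).congr' fun n => ?_
      simp only [Nat.unpair_pair]; rfl
    -- the reduction is the nth function of A
    have hF2 : OracleRecursiveIn g
        (↑(fun q : ℕ => (if (C q.unpair.2 = q.unpair.1 ∧ charFun A q.unpair.2 = 1)
            then 0 else 1 : ℕ)) : ℕ →. ℕ) := by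
      have h1 : OracleRecursiveIn g (↑(fun q : ℕ => q.unpair.1) : ℕ →. ℕ) :=
        OracleRecursiveIn.of_computable (Primrec.to_comp (Primrec.fst.comp Primrec.unpair))
      have h2 : OracleRecursiveIn g (↑(fun q : ℕ => C q.unpair.2) : ℕ →. ℕ) :=
        OracleRecursiveIn.totalComp hCrec (OracleRecursiveIn.of_computable
          (Primrec.to_comp (Primrec.snd.comp Primrec.unpair)))
      have h3 : OracleRecursiveIn g (↑(fun q : ℕ => charFun A q.unpair.2) : ℕ →. ℕ) :=
        OracleRecursiveIn.totalComp hχ (OracleRecursiveIn.of_computable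
          (Primrec.to_comp (Primrec.snd.comp Primrec.unpair)))
      have hin : OracleRecursiveIn g
          (↑(fun q : ℕ => Nat.pair (Nat.pair (C q.unpair.2) q.unpair.1)
              (charFun A q.unpair.2)) : ℕ →. ℕ) :=
        OracleRecursiveIn.totalPair (OracleRecursiveIn.totalPair h2 h1) h3
      have hout : OracleRecursiveIn g
          (↑(fun r : ℕ => (if (r.unpair.1.unpair.1 = r.unpair.1.unpair.2 ∧
              r.unpair.2 = 1) then 0 else 1 : ℕ)) : ℕ →. ℕ) := by
        apply OracleRecursiveIn.of_computable
        apply Primrec.to_comp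
        have ha : PrimrecPred
            (fun r : ℕ => r.unpair.1.unpair.1 = r.unpair.1.unpair.2) :=
          Primrec.eq.comp
            (Primrec.fst.comp (Primrec.unpair.comp (Primrec.fst.comp Primrec.unpair)))
            (Primrec.snd.comp (Primrec.unpair.comp (Primrec.fst.comp Primrec.unpair)))
        have hb : PrimrecPred (fun r : ℕ => r.unpair.2 = 1) :=
          Primrec.eq.comp (Primrec.snd.comp Primrec.unpair) (Primrec.const 1)
        exact Primrec.ite (ha.and hb) (Primrec.const 0) (Primrec.const 1)
      refine (OracleRecursiveIn.totalComp hout hin).congr' fun q => ?_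
      simp
    have hnthrec : OracleRecursiveIn g (↑(fun x => Nat.nth p x) : ℕ →. ℕ) := by
      apply OracleRecursiveIn.totalRfind hF2
      · intro a
        have e1 : C (Nat.nth p a) = a := by
          rw [hCcount]; exact Nat.count_nth_of_infinite hp a
        have e2 : charFun A (Nat.nth p a) = 1 :=
          hχ1 _ (Nat.nth_mem_of_infinite hp a)
        simp [Nat.unpair_pair, e1, e2]
      · intro a m hm
        simp only [Nat.unpair_pair]
        rw [if_neg]
        · exact one_ne_zero
        · rintro ⟨e1, e2⟩
          have hpm : p m := hχ1' m e2
          have hmm := Nat.nth_count (p := p) hpm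
          rw [← hCcount, e1] at hmm
          omega
    refine ⟨fun x => Nat.nth p x, hnthrec, ?_⟩
    intro x y
    constructor
    · rintro rfl; exact hR.refl _
    · intro hr
      by_contra hne
      exact htrans _ (Nat.nth_mem_of_infinite hp x) _ (Nat.nth_mem_of_infinite hp y)
        (fun e => hne (Nat.nth_injective hp e)) hr
end
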